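/- arXiv:1912.01192 — 3 statements merged into one kernel-verified Lean document; each statement's English description precedes it below -/
import Mathlib

section
/- Let ℓ ∈ [0,1], u > 0, γ > 0, and let I ∈ {0,1}. Then ℓ·I/(u+γ) ≤ (1/(2γ))·ln(1 + 2γ·ℓ·I/u). -/
lemma two_mul_div_le_log (z : ℝ) (hz : 0 ≤ z) : 2 * z / (2 + z) ≤ Real.log (1 + z) := by
  set f : ℝ → ℝ := fun y => Real.log (1 + y) - 2 * y / (2 + y) with hf
  have hderiv : ∀ x : ℝ, 0 ≤ x →
      HasDerivAt f (1 / (1 + x) - 4 / (2 + x) ^ 2) x := by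
    intro x hx
    have h1 : (0:ℝ) < 1 + x := by linarith
    have h2 : (0:ℝ) < 2 + x := by linarith
    have hlog : HasDerivAt (fun y : ℝ => Real.log (1 + y)) (1 / (1 + x)) x := by
      have := (Real.hasDerivAt_log h1.ne').comp x ((hasDerivAt_id x).const_add 1)
      simpa [one_div, Function.comp_def] using this
    have hrat : HasDerivAt (fun y : ℝ => 2 * y / (2 + y)) (4 / (2 + x) ^ 2) x := by
      have hnum : HasDerivAt (fun y : ℝ => 2 * y) 2 x := by
        simpa using (hasDerivAt_id x).const_mul 2
      have hden : HasDerivAt (fun y : ℝ => 2 + y) 1 x := (hasDerivAt_id x).const_add 2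
      have := hnum.div hden h2.ne'
      exact this.congr_deriv (by ring)
    exact hlog.sub hrat
  have hmono : MonotoneOn f (Set.Ici (0:ℝ)) := by
    apply monotoneOn_of_deriv_nonneg (convex_Ici 0)
    · exact fun x hx => (hderiv x hx).continuousAt.continuousWithinAt
    · intro x hx
      rw [interior_Ici] at hx
      exact (hderiv x (le_of_lt hx)).differentiableAt.differentiableWithinAt
    · intro x hx
      rw [interior_Ici] at hx
      have hx' : 0 < x := hx
      rw [(hderiv x hx'.le).deriv]
      have h1 : (0:ℝ) < 1 + x := by linarith
      have h2 : (0:ℝ) < 2 + x := by linarith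
      rw [sub_nonneg, div_le_div_iff₀ (by positivity) h1]
      nlinarith [sq_nonneg x]
  have h0 : f 0 = 0 := by simp [hf]
  have := hmono (Set.self_mem_Ici) (Set.mem_Ici.mpr hz) hz
  rw [h0] at this
  simpa [hf, sub_nonneg] using this

theorem ix_estimator_log_bound (ℓ u γ I : ℝ)
    (hℓ0 : 0 ≤ ℓ) (hℓ1 : ℓ ≤ 1) (hu : 0 < u) (hγ : 0 < γ)
    (hI : I = 0 ∨ I = 1) :
    ℓ * I / (u + γ) ≤ (1 / (2 * γ)) * Real.log (1 + 2 * γ * ℓ * I / u) := by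
  rcases hI with h | h
  · simp [h]
  subst h
  set z : ℝ := 2 * γ * ℓ / u with hz
  have hz0 : 0 ≤ z := by positivity
  have hlog := two_mul_div_le_log z hz0
  have hstep1 : ℓ * 1 / (u + γ) ≤ (1 / (2 * γ)) * (2 * z / (2 + z)) := by
    rw [mul_one, hz]
    rw [div_le_iff₀ (by positivity)]
    have h2z : (0:ℝ) < 2 + 2 * γ * ℓ / u := by positivity
    field_simp
    nlinarith [mul_nonneg (mul_nonneg hγ.le hγ.le) (mul_nonneg hℓ0 (sub_nonneg.mpr hℓ1)),
      mul_pos hu hγ]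
  calc ℓ * 1 / (u + γ) ≤ (1 / (2 * γ)) * (2 * z / (2 + z)) := hstep1
    _ ≤ (1 / (2 * γ)) * Real.log (1 + z) := by
        apply mul_le_mul_of_nonneg_left hlog (by positivity)
    _ = (1 / (2 * γ)) * Real.log (1 + 2 * γ * ℓ * 1 / u) := by rw [hz]; ring_nf
end

section
/- Let q ∈ ℝⁿ have positive entries, let ℓ̂ ∈ ℝⁿ have nonnegative entries, and η > 0. Define q̃ᵢ = qᵢ·exp(−η·ℓ̂ᵢ). Then D(q‖q̃) = Σᵢ (η·qᵢ·ℓ̂ᵢ − qᵢ + qᵢ·exp(−η·ℓ̂ᵢ)) ≤ η²·Σᵢ qᵢ·ℓ̂ᵢ², where D is the unnormalized KL-divergence D(q‖q') = Σᵢ qᵢ ln(qᵢ/q'ᵢ) − Σᵢ(qᵢ − q'ᵢ). -/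
lemma exp_neg_le (z : ℝ) (hz : 0 ≤ z) : Real.exp (-z) ≤ 1 - z + z ^ 2 := by
  have h1 : Real.exp (-z) ≤ 1 / (1 + z) := by
    rw [Real.exp_neg, inv_eq_one_div]
    apply one_div_le_one_div_of_le (by linarith)
    linarith [Real.add_one_le_exp z]
  have h2 : (1 : ℝ) / (1 + z) ≤ 1 - z + z ^ 2 := by
    rw [div_le_iff₀ (by linarith)]
    nlinarith [pow_nonneg hz 3]
  linarith

open Finset in
theorem omd_local_norm_bound (n : ℕ) (q lhat : Fin n → ℝ)
    (hq : ∀ i, 0 < q i) (hl : ∀ i, 0 ≤ lhat i) (η : ℝ) (hη : 0 < η)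
    (D : (Fin n → ℝ) → (Fin n → ℝ) → ℝ)
    (hD : ∀ u v, D u v = (∑ i, u i * Real.log (u i / v i)) - ∑ i, (u i - v i))
    (qtil : Fin n → ℝ) (hqtil : ∀ i, qtil i = q i * Real.exp (-η * lhat i)) :
    D q qtil = ∑ i, (η * q i * lhat i - q i + q i * Real.exp (-η * lhat i)) ∧
    D q qtil ≤ η ^ 2 * ∑ i, q i * lhat i ^ 2 := by
  have heq : D q qtil = ∑ i, (η * q i * lhat i - q i + q i * Real.exp (-η * lhat i)) := by
    rw [hD, ← Finset.sum_sub_distrib]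
    apply Finset.sum_congr rfl
    intro i _
    rw [hqtil i]
    have hqi := hq i
    rw [div_mul_eq_div_div, div_self hqi.ne', Real.log_div one_ne_zero (Real.exp_ne_zero _),
      Real.log_exp, Real.log_one]
    ring
  refine ⟨heq, ?_⟩
  rw [heq, Finset.mul_sum]
  apply Finset.sum_le_sum
  intro i _
  have hz : 0 ≤ η * lhat i := mul_nonneg hη.le (hl i)
  have := exp_neg_le (η * lhat i) hz
  rw [neg_mul] at *
  have hqi := (hq i).le
  calc η * q i * lhat i - q i + q i * Real.exp (-(η * lhat i))
      ≤ η * q i * lhat i - q i + q i * (1 - η * lhat i + (η * lhat i) ^ 2) := by nlinarith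
    _ = η ^ 2 * (q i * lhat i ^ 2) := by ring
end

section
/- Let q: X × A × X → [0,1] where X is partitioned into layers X₀,…,X_L with X₀ = {x₀}, X_L = {x_L}, and q is supported on consecutive-layer triples. Suppose (1) for every k ∈ {0,…,L−1}: Σ_{x∈X_k} Σ_{a∈A} Σ_{x'∈X_{k+1}} q(x,a,x') = 1, and (2) for every k ∈ {1,…,L−1} and x ∈ X_k: Σ_{x'∈X_{k−1}} Σ_{a} q(x',a,x) = Σ_{x'∈X_{k+1}} Σ_{a} q(x,a,x'). Define, whenever the denominators are positive, Pᵠ(x'|x,a) = q(x,a,x') / Σ_{y∈X_{k(x)+1}} q(x,a,y) and πᵠ(a|x) = Σ_{x'} q(x,a,x') / Σ_{b,x'} q(x,b,x'). Then q is the occupancy measure induced by executing policy πᵠ in the MDP with transition Pᵠ: for every triple (x,a,x') with x ∈ X_k, q(x,a,x') equals the probability that the layer-k state is x, the action taken is a, and the layer-(k+1) state is x', when the trajectory starts at x₀ and follows πᵠ and Pᵠ. -/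
open Finset

/-- Probability of being at state `x` in layer `k`, when starting from `x₀` and
following policy `π` in the MDP with transition function `P`:
the probability of a trajectory is the product over steps of `π(a|x) · P(x'|x,a)`. -/
def stateProb {X A : Type*} [Fintype X] [Fintype A] [DecidableEq X]
    (P : X → A → X → ℝ) (π : X → A → ℝ) (x₀ : X) : ℕ → X → ℝ
  | 0, x => if x = x₀ then 1 else 0
  | k + 1, x => ∑ y : X, ∑ a : A, stateProb P π x₀ k y * π y a * P y a x

/-- Key algebraic identity: outflow · π · P = q, with division-by-zero conventions. -/
lemma occ_helper {X A : Type*} [Fintype X] [Fintype A]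
    (q : X → A → X → ℝ) (hq0 : ∀ x a x', 0 ≤ q x a x')
    (y : X) (a : A) (x : X) :
    (∑ b : A, ∑ x' : X, q y b x') *
      ((∑ x' : X, q y a x') / ∑ b : A, ∑ x' : X, q y b x') *
      (q y a x / ∑ x' : X, q y a x') = q y a x := by
  set S := ∑ b : A, ∑ x' : X, q y b x' with hSdef
  set T := ∑ x' : X, q y a x' with hTdef
  by_cases hT : T = 0
  · have hqz : q y a x = 0 := by
      have := (Finset.sum_eq_zero_iff_of_nonneg (fun x' _ => hq0 y a x')).mp hT
      exact this x (Finset.mem_univ x)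
    simp [hqz, hT]
  · have hTS : T ≤ S := by
      apply Finset.single_le_sum (f := fun b => ∑ x' : X, q y b x')
      · intro b _
        exact Finset.sum_nonneg fun x' _ => hq0 y b x'
      · exact Finset.mem_univ a
    have hTpos : 0 < T := lt_of_le_of_ne (Finset.sum_nonneg fun x' _ => hq0 y a x') (Ne.symm hT)
    have hS : S ≠ 0 := ne_of_gt (lt_of_lt_of_le hTpos hTS)
    field_simp

/-- Lemma 1 of the paper: in a loop-free layered MDP, any `q` satisfying the per-layer
normalization constraint and the flow-conservation constraint is the occupancy measure
induced by its induced policy `πq` and induced transition function `Pq`. -/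
theorem occupancy_measure_characterization
    {X A : Type*} [Fintype X] [Fintype A] [DecidableEq X]
    (L : ℕ) (layer : X → ℕ) (x₀ xL : X)
    (hx₀ : layer x₀ = 0) (hxL : layer xL = L)
    (hlayer0 : ∀ x, layer x = 0 → x = x₀) (hlayerL : ∀ x, layer x = L → x = xL)
    (hrange : ∀ x, layer x ≤ L)
    (q : X → A → X → ℝ)
    (hq0 : ∀ x a x', 0 ≤ q x a x') (hq1 : ∀ x a x', q x a x' ≤ 1)
    (hsupp : ∀ x a x', q x a x' ≠ 0 → layer x' = layer x + 1)
    (hnorm : ∀ k < L,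
      ∑ x ∈ univ.filter (fun x => layer x = k), ∑ a : A, ∑ x' : X, q x a x' = 1)
    (hflow : ∀ x, 1 ≤ layer x → layer x ≤ L - 1 →
      ∑ x' : X, ∑ a : A, q x' a x = ∑ x' : X, ∑ a : A, q x a x')
    (Pq : X → A → X → ℝ) (πq : X → A → ℝ)
    (hPq : ∀ x a x', Pq x a x' = q x a x' / ∑ y : X, q x a y)
    (hπq : ∀ x a, πq x a = (∑ x' : X, q x a x') / ∑ b : A, ∑ x' : X, q x b x') :
    ∀ x a x', layer x < L → layer x' = layer x + 1 →
      q x a x' = stateProb Pq πq x₀ (layer x) x * πq x a * Pq x a x' := by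
  -- the per-term identity
  have hterm : ∀ y a x, (∑ b : A, ∑ x' : X, q y b x') * πq y a * Pq y a x = q y a x := by
    intro y a x
    rw [hπq, hPq]
    exact occ_helper q hq0 y a x
  -- the main induction
  have main : ∀ k : ℕ, (∀ x, layer x ≠ k → stateProb Pq πq x₀ k x = 0) ∧
      (∀ x, layer x = k → k < L → stateProb Pq πq x₀ k x = ∑ b : A, ∑ x' : X, q x b x') := by
    intro k
    induction k with
    | zero =>
      constructor
      · intro x hx
        have hxne : x ≠ x₀ := fun h => hx (h ▸ hx₀)
        simp [stateProb, hxne]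
      · intro x hx _
        have hxx : x = x₀ := hlayer0 x hx
        subst hxx
        have h0 := hnorm 0 (by omega)
        have hfilter : univ.filter (fun y => layer y = 0) = {x} := by
          ext y
          simp only [mem_filter, mem_univ, true_and, mem_singleton]
          constructor
          · intro h; exact (hlayer0 y h).trans (hlayer0 x hx).symm
          · intro h; subst h; exact hx
        rw [hfilter, Finset.sum_singleton] at h0
        simp [stateProb, h0]
    | succ k ih =>
      have step : ∀ x, stateProb Pq πq x₀ (k + 1) x =
          ∑ y : X, ∑ a : A, if layer y = k then q y a x else 0 := by
        intro x
        show (∑ y : X, ∑ a : A, stateProb Pq πq x₀ k y * πq y a * Pq y a x) = _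
        refine Finset.sum_congr rfl fun y _ => Finset.sum_congr rfl fun a _ => ?_
        by_cases hy : layer y = k
        · simp only [hy, if_true]
          by_cases hkL : k < L
          · rw [ih.2 y hy hkL, hterm]
          · have hqz : q y a x = 0 := by
              by_contra h
              have h1 := hsupp y a x h
              have h2 := hrange x
              omega
            rw [hqz, hPq, hqz]
            simp
        · simp only [hy, if_false]
          rw [ih.1 y hy]
          ring
      constructor
      · intro x hx
        rw [step x]
        refine Finset.sum_eq_zero fun y _ => Finset.sum_eq_zero fun a _ => ?_
        by_cases hy : layer y = k
        · simp only [hy, if_true]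
          by_contra h
          have := hsupp y a x h
          omega
        · simp [hy]
      · intro x hx hkL
        rw [step x]
        have hall : ∀ y a, (if layer y = k then q y a x else 0) = q y a x := by
          intro y a
          by_cases hy : layer y = k
          · simp [hy]
          · have hqz : q y a x = 0 := by
              by_contra h
              have := hsupp y a x h
              omega
            simp [hy, hqz]
        calc (∑ y : X, ∑ a : A, if layer y = k then q y a x else 0)
            = ∑ y : X, ∑ a : A, q y a x := by
              exact Finset.sum_congr rfl fun y _ => Finset.sum_congr rfl fun a _ => hall y a
          _ = ∑ b : A, ∑ x' : X, q x b x' := by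
              have := hflow x (by omega) (by omega)
              rw [this, Finset.sum_comm]
  intro x a x' hk hx'
  rw [(main (layer x)).2 x rfl hk, hterm]
end
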